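/- For n ≥ 4, every maximal elementary abelian 2-subgroup E of the alternating group A_n is conjugate in A_n to a subgroup of the following form: an internal direct product E_{i_1} × V_2^{i_2} × ... × V_r^{i_r} of subgroups supported on pairwise disjoint subsets of the n letters, where for j ≥ 2 each factor V_j is the image of the regular permutation representation of (Z/2)^j on a block of 2^j letters, V_j^{i_j} denotes a product of i_j such factors on disjoint blocks, and E_{i_1} is the subgroup of even permutations in a product V_1^{i_1} of i_1 disjoint transposition subgroups ⟨(a b)⟩ on disjoint pairs of letters; moreover the total number of letters covered, 2i_1 + 4i_2 + ... + 2^r i_r, equals n, n−1, n−2, or n−3. -/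

import Mathlib

open Equiv Equiv.Perm MulAction Finset

section Helpers

variable {G : Type*} [Group G]

private lemma aux_comm_of_sq (H : Subgroup G) (h2 : ∀ g ∈ H, g * g = 1) :
    ∀ a ∈ H, ∀ b ∈ H, a * b = b * a := by
  have hinv : ∀ x ∈ H, x⁻¹ = x := fun x hx => inv_eq_iff_mul_eq_one.mpr (h2 x hx)
  intro a ha b hb
  calc a * b = (a * b)⁻¹ := (hinv _ (H.mul_mem ha hb)).symm
  _ = b⁻¹ * a⁻¹ := mul_inv_rev a b
  _ = b * a := by rw [hinv a ha, hinv b hb]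

private lemma aux_iSup_commute {ι : Type*} (S : ι → Subgroup G)
    (hc : ∀ i j, ∀ x ∈ S i, ∀ y ∈ S j, Commute x y) :
    ∀ x ∈ ⨆ i, S i, ∀ y ∈ ⨆ i, S i, Commute x y := by
  intro x hx
  refine Subgroup.iSup_induction' (C := fun g _ => ∀ y ∈ ⨆ i, S i, Commute g y) S
    ?_ ?_ ?_ hx
  · intro i g hg y hy
    refine Subgroup.iSup_induction' (C := fun z _ => Commute g z) S ?_ ?_ ?_ hy
    · exact fun j z hz => hc i j g hg z hz
    · exact Commute.one_right g
    · exact fun a b _ _ h1 h2 => h1.mul_right h2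
  · exact fun y _ => Commute.one_left y
  · exact fun a b _ _ h1 h2 y hy => (h1 y hy).mul_left (h2 y hy)

private lemma aux_iSup_sq {ι : Type*} (S : ι → Subgroup G)
    (hc : ∀ i j, ∀ x ∈ S i, ∀ y ∈ S j, Commute x y)
    (hsq : ∀ i, ∀ x ∈ S i, x * x = 1) :
    ∀ x ∈ ⨆ i, S i, x * x = 1 := by
  intro x hx
  refine Subgroup.iSup_induction' (C := fun g _ => g * g = 1) S ?_ (one_mul 1) ?_ hx
  · exact fun i g hg => hsq i g hg
  · intro a b ha hb h1 h2
    have hcomm : b * a = a * b := (aux_iSup_commute S hc a ha b hb).eq.symm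
    calc a * b * (a * b) = a * (b * a) * b := by group
    _ = a * (a * b) * b := by rw [hcomm]
    _ = (a * a) * (b * b) := by group
    _ = 1 := by rw [h1, h2, one_mul]

end Helpers

section Res

variable {n : ℕ}

private def resHom (E : Subgroup (Equiv.Perm (Fin n))) (B : Finset (Fin n))
    (h : ∀ e : E, ∀ x : Fin n, x ∈ B ↔ (e : Equiv.Perm (Fin n)) x ∈ B) :
    E →* Equiv.Perm (Fin n) where
  toFun e := Equiv.Perm.ofSubtype ((e : Equiv.Perm (Fin n)).subtypePerm (fun x => (h e x).symm))
  map_one' := by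
    simp only [OneMemClass.coe_one, Equiv.Perm.subtypePerm_one, map_one]
    exact map_one Equiv.Perm.ofSubtype
  map_mul' e f := by
    rw [← map_mul, Equiv.Perm.subtypePerm_mul]
    rfl

private lemma resHom_apply_of_mem (E : Subgroup (Equiv.Perm (Fin n))) (B : Finset (Fin n))
    (h) (e : E) {x : Fin n} (hx : x ∈ B) :
    resHom E B h e x = (e : Equiv.Perm (Fin n)) x := by
  simp [resHom, Equiv.Perm.ofSubtype_apply_of_mem _ hx]

private lemma resHom_apply_of_not_mem (E : Subgroup (Equiv.Perm (Fin n))) (B : Finset (Fin n))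
    (h) (e : E) {x : Fin n} (hx : x ∉ B) :
    resHom E B h e x = x := by
  simp [resHom, Equiv.Perm.ofSubtype_apply_of_not_mem _ hx]

end Res

theorem maximal_elementary_abelian_of_alternating_group
    (n : ℕ) (hn : 4 ≤ n) (E : Subgroup (Equiv.Perm (Fin n)))
    (hE : E ≤ alternatingGroup (Fin n))
    (h2 : ∀ g ∈ E, g * g = 1)
    (hmax : ∀ E' : Subgroup (Equiv.Perm (Fin n)),
      E' ≤ alternatingGroup (Fin n) → (∀ g ∈ E', g * g = 1) → E ≤ E' → E' = E) :
    ∃ σ ∈ alternatingGroup (Fin n), ∃ (k : ℕ) (J : Fin k → ℕ)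
      (B : Fin k → Finset (Fin n)) (V : Fin k → Subgroup (Equiv.Perm (Fin n))),
      (∀ a, 1 ≤ J a) ∧
      (∀ a, (B a).card = 2 ^ J a) ∧
      (∀ a b, a ≠ b → Disjoint (B a) (B b)) ∧
      (∀ a, ∀ g ∈ V a, ∀ x : Fin n, x ∉ B a → g x = x) ∧
      (∀ a, ∀ g ∈ V a, g * g = 1) ∧
      (∀ a, Nat.card ↥(V a) = 2 ^ J a) ∧
      (∀ a, ∀ g ∈ V a, g ≠ 1 → ∀ x ∈ B a, g x ≠ x) ∧
      (∀ a, ∀ x ∈ B a, ∀ y ∈ B a, ∃ g ∈ V a, g x = y) ∧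
      (n ≤ (∑ a, (B a).card) + 3) ∧
      Subgroup.map (MulAut.conj σ).toMonoidHom E =
        (⨆ a, V a) ⊓ alternatingGroup (Fin n) := by
  classical
  -- the orbit finsets
  obtain ⟨orb, horb⟩ : ∃ orb : Fin n → Finset (Fin n),
      ∀ x y, y ∈ orb x ↔ y ∈ MulAction.orbit E x :=
    ⟨fun x => (Set.toFinite (MulAction.orbit E x)).toFinset,
      fun x y => Set.Finite.mem_toFinset _⟩
  have horb_self : ∀ x, x ∈ orb x := fun x => (horb x x).mpr (MulAction.mem_orbit_self x)
  have hsmul : ∀ (e : E) (x : Fin n), e • x = (e : Equiv.Perm (Fin n)) x := fun e x => rfl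
  have horb_eq : ∀ x y, y ∈ orb x → orb y = orb x := by
    intro x y hy
    have : MulAction.orbit E y = MulAction.orbit E x := by
      rw [MulAction.orbit_eq_iff]
      exact (horb x y).mp hy
    ext z
    rw [horb, horb, this]
  have horb_inv : ∀ (x : Fin n) (e : E) (z : Fin n),
      z ∈ orb x ↔ (e : Equiv.Perm (Fin n)) z ∈ orb x := by
    intro x e z
    constructor
    · intro hz
      obtain ⟨g, hg⟩ := MulAction.mem_orbit_iff.mp ((horb x z).mp hz)
      exact (horb x _).mpr (MulAction.mem_orbit_iff.mpr ⟨e * g, by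
        rw [mul_smul, hg]; rfl⟩)
    · intro hz
      obtain ⟨g, hg⟩ := MulAction.mem_orbit_iff.mp ((horb x _).mp hz)
      refine (horb x z).mpr (MulAction.mem_orbit_iff.mpr ⟨e⁻¹ * g, ?_⟩)
      rw [mul_smul, hg]
      show ((e⁻¹ : ↥E) : Equiv.Perm (Fin n)) ((e : Equiv.Perm (Fin n)) z) = z
      simp
  -- the set of nonsingleton orbits
  set O : Finset (Finset (Fin n)) :=
    (Finset.univ.image orb).filter (fun s => 2 ≤ s.card) with hO
  set k : ℕ := O.card with hk
  set B : Fin k → Finset (Fin n) := fun a => ((O.equivFin.symm a : ↥O) : Finset (Fin n))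
    with hBdef
  have hBmem : ∀ a, B a ∈ O := fun a => (O.equivFin.symm a).2
  have hBinj : Function.Injective B := by
    intro a b hab
    have := O.equivFin.symm.injective (Subtype.ext hab)
    exact this
  have hBsurj : ∀ s ∈ O, ∃ a, B a = s := by
    intro s hs
    exact ⟨O.equivFin ⟨s, hs⟩, by simp [hBdef]⟩
  have hBex : ∀ a, ∃ x, orb x = B a := by
    intro a
    have := hBmem a
    rw [hO, Finset.mem_filter, Finset.mem_image] at this
    obtain ⟨⟨x, -, hx⟩, -⟩ := this
    exact ⟨x, hx⟩
  have hBcard2 : ∀ a, 2 ≤ (B a).card := by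
    intro a
    have := hBmem a
    rw [hO, Finset.mem_filter] at this
    exact this.2
  choose x₀ hx₀ using hBex
  have hx₀mem : ∀ a, x₀ a ∈ B a := fun a => (hx₀ a) ▸ horb_self (x₀ a)
  have hinvB : ∀ a (e : E) (x : Fin n), x ∈ B a ↔ (e : Equiv.Perm (Fin n)) x ∈ B a := by
    intro a e x
    rw [← hx₀ a]
    exact horb_inv (x₀ a) e x
  have hdisj : ∀ a b, a ≠ b → Disjoint (B a) (B b) := by
    intro a b hab
    rw [Finset.disjoint_left]
    intro z hza hzb
    refine hab (hBinj ?_)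
    rw [← hx₀ a] at hza ⊢
    rw [← hx₀ b] at hzb ⊢
    rw [← horb_eq _ _ hza, ← horb_eq _ _ hzb]
  -- the factor subgroups
  set V : Fin k → Subgroup (Equiv.Perm (Fin n)) :=
    fun a => (resHom E (B a) (hinvB a)).range with hVdef
  have hVsupp : ∀ a, ∀ g ∈ V a, ∀ x : Fin n, x ∉ B a → g x = x := by
    rintro a g ⟨e, rfl⟩ x hx
    exact resHom_apply_of_not_mem E (B a) (hinvB a) e hx
  have hVmaps : ∀ a, ∀ g ∈ V a, ∀ x ∈ B a, g x ∈ B a := by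
    rintro a g ⟨e, rfl⟩ x hx
    rw [resHom_apply_of_mem E (B a) (hinvB a) e hx]
    exact (hinvB a e x).mp hx
  have hVsq : ∀ a, ∀ g ∈ V a, g * g = 1 := by
    rintro a g ⟨e, rfl⟩
    rw [← map_mul]
    have : e * e = 1 := Subtype.ext (h2 (e : Equiv.Perm (Fin n)) e.2)
    rw [this, map_one]
  have hEcomm : ∀ a ∈ E, ∀ b ∈ E, a * b = b * a := aux_comm_of_sq E h2
  have hVfree0 : ∀ a, ∀ g ∈ V a, ∀ x ∈ B a, g x = x → g = 1 := by
    rintro a g ⟨e, rfl⟩ x hx hgx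
    have hex : (e : Equiv.Perm (Fin n)) x = x := by
      rwa [resHom_apply_of_mem E (B a) (hinvB a) e hx] at hgx
    have hall : ∀ y ∈ B a, (e : Equiv.Perm (Fin n)) y = y := by
      intro y hy
      have hyx : y ∈ orb x := by
        rw [horb_eq (x₀ a) x (by rwa [hx₀ a]), hx₀ a]
        exact hy
      obtain ⟨f, hf⟩ := MulAction.mem_orbit_iff.mp ((horb x y).mp hyx)
      rw [hsmul] at hf
      calc (e : Equiv.Perm (Fin n)) y = (↑e * ↑f : Equiv.Perm (Fin n)) x := by
            rw [Equiv.Perm.mul_apply, hf]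
      _ = (↑f * ↑e : Equiv.Perm (Fin n)) x := by rw [hEcomm _ e.2 _ f.2]
      _ = (f : Equiv.Perm (Fin n)) x := by rw [Equiv.Perm.mul_apply, hex]
      _ = y := hf
    ext y
    by_cases hy : y ∈ B a
    · rw [resHom_apply_of_mem E (B a) (hinvB a) e hy, hall y hy]
      rfl
    · rw [resHom_apply_of_not_mem E (B a) (hinvB a) e hy]
      rfl
  have hVfree : ∀ a, ∀ g ∈ V a, g ≠ 1 → ∀ x ∈ B a, g x ≠ x := by
    intro a g hg hg1 x hx hgx
    exact hg1 (hVfree0 a g hg x hx hgx)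
  have hVtrans : ∀ a, ∀ x ∈ B a, ∀ y ∈ B a, ∃ g ∈ V a, g x = y := by
    intro a x hx y hy
    have hyx : y ∈ orb x := by
      rw [horb_eq (x₀ a) x (by rwa [hx₀ a]), hx₀ a]
      exact hy
    obtain ⟨f, hf⟩ := MulAction.mem_orbit_iff.mp ((horb x y).mp hyx)
    rw [hsmul] at hf
    exact ⟨resHom E (B a) (hinvB a) f, ⟨f, rfl⟩,
      by rw [resHom_apply_of_mem E (B a) (hinvB a) f hx, hf]⟩
  have hVcard : ∀ a, Nat.card ↥(V a) = (B a).card := by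
    intro a
    have hbij : Function.Bijective (fun g : ↥(V a) =>
        (⟨(g : Equiv.Perm (Fin n)) (x₀ a), hVmaps a g g.2 (x₀ a) (hx₀mem a)⟩ : ↥(B a))) := by
      constructor
      · intro g h hgh
        have hgh' : (g : Equiv.Perm (Fin n)) (x₀ a) = (h : Equiv.Perm (Fin n)) (x₀ a) :=
          congrArg Subtype.val hgh
        have hmem : ((h⁻¹ * g : ↥(V a)) : Equiv.Perm (Fin n)) ∈ V a := (h⁻¹ * g).2
        have hfix : ((h⁻¹ * g : ↥(V a)) : Equiv.Perm (Fin n)) (x₀ a) = x₀ a := by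
          have hco : ((h⁻¹ * g : ↥(V a)) : Equiv.Perm (Fin n)) =
              ((h : Equiv.Perm (Fin n)))⁻¹ * (g : Equiv.Perm (Fin n)) := rfl
          rw [hco, Equiv.Perm.mul_apply, hgh', ← Equiv.Perm.mul_apply, inv_mul_cancel, Equiv.Perm.one_apply]
        have := hVfree0 a _ hmem (x₀ a) (hx₀mem a) hfix
        have h1 : (h⁻¹ * g : ↥(V a)) = 1 := Subtype.ext this
        exact (inv_mul_eq_one.mp h1).symm
      · rintro ⟨y, hy⟩
        obtain ⟨g, hg, hgy⟩ := hVtrans a (x₀ a) (hx₀mem a) y hy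
        exact ⟨⟨g, hg⟩, Subtype.ext hgy⟩
    rw [Nat.card_eq_of_bijective _ hbij, Nat.card_eq_finsetCard]
  have hVpgroup : ∀ a, ∃ j, (B a).card = 2 ^ j := by
    intro a
    have hpg : IsPGroup 2 ↥(V a) := by
      intro g
      refine ⟨1, ?_⟩
      have hco := hVsq a (g : Equiv.Perm (Fin n)) g.2
      have hg2 : g * g = 1 := Subtype.ext hco
      rw [pow_one, pow_two, hg2]
    haveI : Fact (Nat.Prime 2) := ⟨Nat.prime_two⟩
    obtain ⟨j, hj⟩ := hpg.exists_card_eq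
    exact ⟨j, by rw [← hVcard a, hj]⟩
  set J : Fin k → ℕ := fun a => Nat.log 2 ((B a).card) with hJdef
  have hcardJ : ∀ a, (B a).card = 2 ^ J a := by
    intro a
    obtain ⟨j, hj⟩ := hVpgroup a
    rw [hJdef]
    simp only [hj, Nat.log_pow Nat.one_lt_two]
  have hJ1 : ∀ a, 1 ≤ J a := by
    intro a
    by_contra h
    have hj0 : J a = 0 := by omega
    have := hBcard2 a
    rw [hcardJ a, hj0, pow_zero] at this
    omega
  -- coverage
  have hcover : ∀ x : Fin n, (∃ a, x ∈ B a) ∨ (∀ e : E, (e : Equiv.Perm (Fin n)) x = x) := by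
    intro x
    by_cases hcard : 2 ≤ (orb x).card
    · left
      have hmem : orb x ∈ O := by
        rw [hO, Finset.mem_filter, Finset.mem_image]
        exact ⟨⟨x, Finset.mem_univ x, rfl⟩, hcard⟩
      obtain ⟨a, ha⟩ := hBsurj _ hmem
      exact ⟨a, ha ▸ horb_self x⟩
    · right
      intro e
      have h1 : (orb x).card = 1 := by
        have := Finset.card_pos.mpr ⟨x, horb_self x⟩
        omega
      obtain ⟨z, hz⟩ := Finset.card_eq_one.mp h1
      have hxz : x = z := by
        have := horb_self x
        rw [hz, Finset.mem_singleton] at this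
        exact this
      have : (e : Equiv.Perm (Fin n)) x ∈ orb x := (horb_inv x e x).mp (horb_self x)
      rw [hz, Finset.mem_singleton] at this
      rw [this, hxz]
  -- fixed points bound
  have hfixbound : n ≤ (∑ a, (B a).card) + 3 := by
    set U : Finset (Fin n) := Finset.univ.biUnion B with hU
    have hsum : ∑ a, (B a).card = U.card :=
      (Finset.card_biUnion (fun a _ b _ hab => hdisj a b hab)).symm
    have hUc : ∀ x ∈ Uᶜ, ∀ e ∈ E, e x = x := by
      intro x hx e he
      rcases hcover x with ⟨a, ha⟩ | hfix
      · exact absurd (Finset.mem_biUnion.mpr ⟨a, Finset.mem_univ a, ha⟩)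
          (Finset.mem_compl.mp hx)
      · exact hfix ⟨e, he⟩
    have hUcc : Uᶜ.card ≤ 3 := by
      by_contra hlt
      push_neg at hlt
      obtain ⟨a, haU⟩ := Finset.card_pos.mp (show 0 < Uᶜ.card by omega)
      obtain ⟨b, hb⟩ := Finset.card_pos.mp (show 0 < (Uᶜ.erase a).card by
        rw [Finset.card_erase_of_mem haU]; omega)
      obtain ⟨hba, hbU⟩ := Finset.mem_erase.mp hb
      obtain ⟨c, hc⟩ := Finset.card_pos.mp (show 0 < ((Uᶜ.erase a).erase b).card by
        rw [Finset.card_erase_of_mem hb, Finset.card_erase_of_mem haU]; omega)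
      obtain ⟨hcb, hc'⟩ := Finset.mem_erase.mp hc
      obtain ⟨hca, hcU⟩ := Finset.mem_erase.mp hc'
      obtain ⟨d, hd⟩ := Finset.card_pos.mp
        (show 0 < (((Uᶜ.erase a).erase b).erase c).card by
          rw [Finset.card_erase_of_mem hc, Finset.card_erase_of_mem hb,
            Finset.card_erase_of_mem haU]; omega)
      obtain ⟨hdc, hd'⟩ := Finset.mem_erase.mp hd
      obtain ⟨hdb, hd''⟩ := Finset.mem_erase.mp hd'
      obtain ⟨hda, hdU⟩ := Finset.mem_erase.mp hd''
      set t : Equiv.Perm (Fin n) := Equiv.swap a b * Equiv.swap c d with htdef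
      have hdisjswap : (Equiv.swap a b).Disjoint (Equiv.swap c d) := by
        intro x
        by_cases hxa : x = a
        · right; subst hxa
          exact Equiv.swap_apply_of_ne_of_ne (Ne.symm hca) (Ne.symm hda)
        · by_cases hxb : x = b
          · right; subst hxb
            exact Equiv.swap_apply_of_ne_of_ne (Ne.symm hcb) (Ne.symm hdb)
          · left
            exact Equiv.swap_apply_of_ne_of_ne hxa hxb
      have hcommswap : Commute (Equiv.swap a b) (Equiv.swap c d) :=
        hdisjswap.commute
      have ht2 : t * t = 1 := by
        rw [htdef, ← pow_two, Commute.mul_pow hcommswap, pow_two, pow_two,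
          Equiv.swap_mul_self, Equiv.swap_mul_self, one_mul]
      have htA : t ∈ alternatingGroup (Fin n) := by
        rw [Equiv.Perm.mem_alternatingGroup, htdef, Equiv.Perm.sign_mul,
          Equiv.Perm.sign_swap (Ne.symm hba), Equiv.Perm.sign_swap (Ne.symm hdc)]
        norm_num
      have hta : t a = b := by
        rw [htdef, Equiv.Perm.mul_apply,
          Equiv.swap_apply_of_ne_of_ne (Ne.symm hca) (Ne.symm hda),
          Equiv.swap_apply_left]
      have htcomm : ∀ e ∈ E, Commute e t := by
        intro e he
        refine Equiv.Perm.Disjoint.commute ?_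
        intro x
        by_cases hx : x = a ∨ x = b ∨ x = c ∨ x = d
        · left
          rcases hx with rfl | rfl | rfl | rfl
          · exact hUc x haU e he
          · exact hUc x hbU e he
          · exact hUc x hcU e he
          · exact hUc x hdU e he
        · right
          push_neg at hx
          obtain ⟨h1, h3, h4, h5⟩ := hx
          rw [htdef, Equiv.Perm.mul_apply, Equiv.swap_apply_of_ne_of_ne h4 h5,
            Equiv.swap_apply_of_ne_of_ne h1 h3]
      set St : Bool → Subgroup (Equiv.Perm (Fin n)) :=
        fun b => Bool.rec (Subgroup.zpowers t) E b with hStdef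
      have hcS : ∀ i j, ∀ x ∈ St i, ∀ y ∈ St j, Commute x y := by
        intro i j x hx y hy
        cases i <;> cases j
        · obtain ⟨mx, rfl⟩ := Subgroup.mem_zpowers_iff.mp hx
          obtain ⟨my, rfl⟩ := Subgroup.mem_zpowers_iff.mp hy
          exact (Commute.refl t).zpow_zpow mx my
        · obtain ⟨mx, rfl⟩ := Subgroup.mem_zpowers_iff.mp hx
          exact ((htcomm y hy).symm).zpow_left mx
        · obtain ⟨my, rfl⟩ := Subgroup.mem_zpowers_iff.mp hy
          exact (htcomm x hx).zpow_right my
        · exact hEcomm x hx y hy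
      have hsqS : ∀ i, ∀ x ∈ St i, x * x = 1 := by
        intro i x hx
        cases i
        · obtain ⟨m, rfl⟩ := Subgroup.mem_zpowers_iff.mp hx
          calc t ^ m * t ^ m = t ^ (m + m) := (zpow_add t m m).symm
          _ = t ^ (2 * m) := by ring_nf
          _ = (t ^ (2 : ℤ)) ^ m := by rw [zpow_mul]
          _ = (t * t) ^ m := by rw [zpow_two]
          _ = 1 := by rw [ht2, one_zpow]
        · exact h2 x hx
      have hE'le : (⨆ i, St i) ≤ alternatingGroup (Fin n) := by
        refine iSup_le ?_
        intro i
        cases i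
        · exact Subgroup.zpowers_le.mpr htA
        · exact hE
      have hE'eq : (⨆ i, St i) = E :=
        hmax _ hE'le (aux_iSup_sq St hcS hsqS) (le_iSup St true)
      have htE : t ∈ E := by
        rw [← hE'eq]
        exact le_iSup St false (Subgroup.mem_zpowers t)
      have := hUc a haU t htE
      rw [hta] at this
      exact hba this
    have htot : U.card + Uᶜ.card = n := by
      rw [Finset.card_add_card_compl, Fintype.card_fin]
    omega
  -- E is contained in the sup
  have hUinv : ∀ (s : Finset (Fin k)) (e : E) (x : Fin n),
      x ∈ s.biUnion B ↔ (e : Equiv.Perm (Fin n)) x ∈ s.biUnion B := by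
    intro s e x
    simp only [Finset.mem_biUnion]
    constructor
    · rintro ⟨a, ha, hx⟩; exact ⟨a, ha, (hinvB a e x).mp hx⟩
    · rintro ⟨a, ha, hx⟩; exact ⟨a, ha, (hinvB a e x).mpr hx⟩
  have hmainind : ∀ (s : Finset (Fin k)) (e : E),
      Equiv.Perm.ofSubtype ((e : Equiv.Perm (Fin n)).subtypePerm
        (fun x => (hUinv s e x).symm)) ∈ ⨆ a, V a := by
    intro s
    induction s using Finset.induction_on with
    | empty =>
      intro e
      have hone : Equiv.Perm.ofSubtype ((e : Equiv.Perm (Fin n)).subtypePerm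
          (fun x => (hUinv ∅ e x).symm)) = 1 := by
        ext x
        rw [Equiv.Perm.ofSubtype_apply_of_not_mem _ (by simp)]
        simp
      rw [hone]
      exact one_mem _
    | @insert a s ha ih =>
      intro e
      have heq : Equiv.Perm.ofSubtype ((e : Equiv.Perm (Fin n)).subtypePerm
            (fun x => (hUinv (insert a s) e x).symm)) =
          resHom E (B a) (hinvB a) e *
            Equiv.Perm.ofSubtype ((e : Equiv.Perm (Fin n)).subtypePerm
              (fun x => (hUinv s e x).symm)) := by
        ext x
        rw [Equiv.Perm.mul_apply]
        by_cases hxa : x ∈ B a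
        · have hxi : x ∈ (insert a s).biUnion B :=
            Finset.mem_biUnion.mpr ⟨a, Finset.mem_insert_self a s, hxa⟩
          have hxs : x ∉ s.biUnion B := by
            intro hx
            obtain ⟨b, hb, hxb⟩ := Finset.mem_biUnion.mp hx
            exact (Finset.disjoint_left.mp (hdisj a b (fun h => ha (h ▸ hb))) hxa) hxb
          rw [Equiv.Perm.ofSubtype_apply_of_mem _ hxi,
            Equiv.Perm.ofSubtype_apply_of_not_mem _ hxs,
            resHom_apply_of_mem E (B a) (hinvB a) e hxa]
          rfl
        · by_cases hxs : x ∈ s.biUnion B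
          · have hxi : x ∈ (insert a s).biUnion B := by
              obtain ⟨b, hb, hxb⟩ := Finset.mem_biUnion.mp hxs
              exact Finset.mem_biUnion.mpr ⟨b, Finset.mem_insert_of_mem hb, hxb⟩
            have hexs : (e : Equiv.Perm (Fin n)) x ∈ s.biUnion B := (hUinv s e x).mp hxs
            have hexa : (e : Equiv.Perm (Fin n)) x ∉ B a := by
              intro h
              obtain ⟨b, hb, hxb⟩ := Finset.mem_biUnion.mp hexs
              exact (Finset.disjoint_left.mp (hdisj a b (fun hh => ha (hh ▸ hb))) h) hxb
            rw [Equiv.Perm.ofSubtype_apply_of_mem _ hxi,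
              Equiv.Perm.ofSubtype_apply_of_mem _ hxs,
              Equiv.Perm.subtypePerm_apply, Equiv.Perm.subtypePerm_apply,
              resHom_apply_of_not_mem E (B a) (hinvB a) e hexa]
          · have hxi : x ∉ (insert a s).biUnion B := by
              intro hx
              obtain ⟨b, hb, hxb⟩ := Finset.mem_biUnion.mp hx
              rcases Finset.mem_insert.mp hb with rfl | hb'
              · exact hxa hxb
              · exact hxs (Finset.mem_biUnion.mpr ⟨b, hb', hxb⟩)
            rw [Equiv.Perm.ofSubtype_apply_of_not_mem _ hxi,
              Equiv.Perm.ofSubtype_apply_of_not_mem _ hxs,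
              resHom_apply_of_not_mem E (B a) (hinvB a) e hxa]
      rw [heq]
      exact mul_mem (Subgroup.mem_iSup_of_mem a ⟨e, rfl⟩) (ih e)
  have hkey : ∀ e : E, (e : Equiv.Perm (Fin n)) ∈ ⨆ a, V a := by
    intro e
    have heq : (e : Equiv.Perm (Fin n)) =
        Equiv.Perm.ofSubtype ((e : Equiv.Perm (Fin n)).subtypePerm
          (fun x => (hUinv Finset.univ e x).symm)) := by
      ext x
      by_cases hx : x ∈ Finset.univ.biUnion B
      · rw [Equiv.Perm.ofSubtype_apply_of_mem _ hx]
        rfl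
      · rw [Equiv.Perm.ofSubtype_apply_of_not_mem _ hx]
        rcases hcover x with ⟨a, hax⟩ | hfix
        · exact absurd (Finset.mem_biUnion.mpr ⟨a, Finset.mem_univ a, hax⟩) hx
        · exact congrArg Fin.val (hfix e)
    rw [heq]
    exact hmainind Finset.univ e
  -- elementwise commutation between factors
  have hVcomm : ∀ a b, ∀ x ∈ V a, ∀ y ∈ V b, Commute x y := by
    intro a b x hx y hy
    rcases eq_or_ne a b with rfl | hab
    · exact aux_comm_of_sq (V a) (hVsq a) x hx y hy
    · refine Equiv.Perm.Disjoint.commute ?_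
      intro z
      by_cases hz : z ∈ B a
      · right
        exact hVsupp b y hy z (Finset.disjoint_left.mp (hdisj a b hab) hz)
      · left
        exact hVsupp a x hx z hz
  have hsupsq : ∀ g ∈ ⨆ a, V a, g * g = 1 := aux_iSup_sq V hVcomm hVsq
  -- maximality
  set W : Subgroup (Equiv.Perm (Fin n)) := (⨆ a, V a) ⊓ alternatingGroup (Fin n) with hW
  have hWE : W = E := by
    refine hmax W inf_le_right (fun g hg => hsupsq g hg.1) (le_inf ?_ hE)
    intro g hg
    exact hkey ⟨g, hg⟩
  refine ⟨1, one_mem _, k, J, B, V, hJ1, hcardJ, hdisj, hVsupp, hVsq, ?_, hVfree, hVtrans,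
    hfixbound, ?_⟩
  · intro a
    rw [hVcard a, hcardJ a]
  · have hid : (MulAut.conj (1 : Equiv.Perm (Fin n))).toMonoidHom = MonoidHom.id _ := by
      ext g
      simp
    rw [hid, Subgroup.map_id, ← hW, hWE]
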